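/- For r, s > 0, the condition 2(1-r-s)(r+s-√s·√(r+s)) ≤ r implies r+s+√s·√(r+s) ≥ √(2(r+s-√s·√(r+s))) - (r+s-√s·√(r+s)). -/
import Mathlib

theorem cond_implies_ge (r s : ℝ) (hr : 0 < r) (hs : 0 < s)
    (h : 2 * (1 - r - s) * (r + s - Real.sqrt s * Real.sqrt (r + s)) ≤ r) :
    r + s + Real.sqrt s * Real.sqrt (r + s) ≥
      Real.sqrt (2 * (r + s - Real.sqrt s * Real.sqrt (r + s)))
        - (r + s - Real.sqrt s * Real.sqrt (r + s)) := by
  set t := r + s with ht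
  set u := Real.sqrt s * Real.sqrt t with hu
  have htpos : 0 < t := by positivity
  have hu2 : u ^ 2 = s * t := by
    rw [hu, mul_pow, Real.sq_sqrt hs.le, Real.sq_sqrt htpos.le]
  have hun : 0 ≤ u := by positivity
  have hut : u ≤ t := by
    calc u ≤ Real.sqrt t * Real.sqrt t := by
          apply mul_le_mul_of_nonneg_right _ (Real.sqrt_nonneg t)
          exact Real.sqrt_le_sqrt (by linarith)
      _ = t := Real.mul_self_sqrt htpos.le
  -- key: t - u ≤ 2 t ^ 2
  have key : t - u ≤ 2 * t ^ 2 := by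
    nlinarith [mul_le_mul_of_nonneg_right h htpos.le, sq_nonneg (t - u)]
  have hsq : Real.sqrt (2 * (t - u)) ≤ 2 * t := by
    rw [show (2 : ℝ) * t = Real.sqrt ((2 * t) ^ 2) from
      (Real.sqrt_sq (by linarith)).symm]
    exact Real.sqrt_le_sqrt (by nlinarith)
  linarith
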